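/- (Upper performance bound for MaRS.) Let R be a finite set of resource blocks, T a finite set of TTIs, I a finite set of users with requirements Λ : I → ℝ, Λ(i) > 0, and let d_max > 0. Suppose x : R × T × I → {0,1} satisfies Σ_{i∈I} x(r,t,i) ≤ 1 for every (r,t), u : I → {0,1}, and for every i, Σ_{(r,t)} x(r,t,i)·d_max ≥ u(i)·Λ(i). Then Σ_{i∈I} u(i) ≤ k*, where k* is the largest k such that the sum of the k smallest values of ⌈Λ(i)/d_max⌉ over i ∈ I is at most |R|·|T|. -/

import Mathlib

/-- The list of values of `n`, sorted in increasing order. -/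
def sortedAsc {ι : Type*} [Fintype ι] (n : ι → ℕ) : List ℕ :=
  (Finset.univ.val.map n).sort (· ≤ ·)

/-- The sum of the `k` smallest values of `n`: the length-`k` prefix sum of
`n` sorted in increasing order. -/
def botkSum {ι : Type*} [Fintype ι] (n : ι → ℕ) (k : ℕ) : ℕ :=
  ((sortedAsc n).take k).sum

lemma take_cons_sum_le {a : ℕ} {l : List ℕ} (ha : ∀ b ∈ l, a ≤ b) :
    ∀ {k : ℕ}, k ≤ l.length → ((a :: l).take k).sum ≤ (l.take k).sum
  | 0, _ => by simp
  | (j+1), hk => by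
    have hj : j < l.length := hk
    rw [List.take_succ_cons, List.sum_cons, List.sum_take_succ _ _ hj]
    have h1 : (l.take j).sum ≤ (l.take j).sum := le_rfl
    have h2 : a ≤ l[j] := ha _ (l.getElem_mem hj)
    omega

lemma sorted_take_sum_le : ∀ {l' l : List ℕ}, List.Sublist l' l → l.Pairwise (· ≤ ·) →
    (l.take l'.length).sum ≤ l'.sum := by
  intro l' l h
  induction h with
  | slnil => simp
  | cons a h ih =>
    intro hs
    rename_i l₁ l₂
    have hlen : l₁.length ≤ l₂.length := h.length_le
    calc ((a :: l₂).take l₁.length).sum ≤ (l₂.take l₁.length).sum :=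
          take_cons_sum_le (fun b hb => List.rel_of_pairwise_cons hs hb) hlen
      _ ≤ l₁.sum := ih hs.of_cons
  | cons_cons a h ih =>
    intro hs
    rename_i l₁ l₂
    simp only [List.length_cons, List.take_succ_cons, List.sum_cons]
    exact Nat.add_le_add_left (ih hs.of_cons) a

/-- The sum of the `k` smallest values is at most the sum over any `k`-element subset. -/
lemma botkSum_le_sum {ι : Type*} [Fintype ι] (n : ι → ℕ) (S : Finset ι) :
    botkSum n S.card ≤ ∑ i ∈ S, n i := by
  set ms : Multiset ℕ := S.val.map n with hms
  set mm : Multiset ℕ := Finset.univ.val.map n with hmm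
  have hle : ms ≤ mm := Multiset.map_le_map (Finset.val_le_iff.mpr (S.subset_univ))
  set ls : List ℕ := ms.sort (· ≤ ·) with hls
  have hsub : List.Sublist ls (sortedAsc n) := by
    apply List.sublist_of_subperm_of_pairwise (r := (· ≤ ·))
    · rw [← Multiset.coe_le]
      rw [show ((ls : List ℕ) : Multiset ℕ) = ms from Multiset.sort_eq _ _,
        show ((sortedAsc n : List ℕ) : Multiset ℕ) = mm from Multiset.sort_eq _ _]
      exact hle
    · exact Multiset.pairwise_sort _ _
    · exact Multiset.pairwise_sort _ _
  have hlen : ls.length = S.card := by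
    rw [hls, Multiset.length_sort, hms, Multiset.card_map, Finset.card_def]
  have hsum : ls.sum = ∑ i ∈ S, n i := by
    calc ls.sum = ((ls : List ℕ) : Multiset ℕ).sum := (Multiset.sum_coe ls).symm
      _ = ms.sum := by rw [Multiset.sort_eq]
      _ = ∑ i ∈ S, n i := rfl
  have := sorted_take_sum_le hsub (Multiset.pairwise_sort _ _)
  rw [hlen, hsum] at this
  exact this

/-- Upper performance bound for MaRS: under the orthogonality constraint and the
fictitious best-channel scenario (each allocated resource-block/TTI pair contributes
at most `d_max` bits), the number of served users is at most the largest `k` such that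
the sum of the `k` smallest resource-block costs `⌈Λ i / d_max⌉` is within the budget
`|R| · |T|`. -/
theorem stmt10 {R T I : Type*} [Fintype R] [Fintype T] [Fintype I]
    (x : R → T → I → ℝ) (u Λ : I → ℝ) (dmax : ℝ) (hdmax : 0 < dmax)
    (hΛ : ∀ i, 0 < Λ i)
    (hu : ∀ i, u i = 0 ∨ u i = 1)
    (hx : ∀ r t i, x r t i = 0 ∨ x r t i = 1)
    (horth : ∀ r t, ∑ i, x r t i ≤ 1)
    (hserve : ∀ i, u i * Λ i ≤ ∑ r, ∑ t, x r t i * dmax) :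
    ∑ i, u i ≤
      ((sSup {k : ℕ | k ≤ Fintype.card I ∧
          botkSum (fun i => ⌈Λ i / dmax⌉₊) k ≤ Fintype.card R * Fintype.card T} : ℕ) : ℝ) := by
  classical
  set n : I → ℕ := fun i => ⌈Λ i / dmax⌉₊ with hn
  set S : Finset I := Finset.univ.filter (fun i => u i = 1) with hS
  -- count of allocated (r,t) pairs for user i
  set c : I → ℕ := fun i =>
    (Finset.univ.filter (fun p : R × T => x p.1 p.2 i = 1)).card with hc
  have hxnonneg : ∀ r t i, (0:ℝ) ≤ x r t i := by
    intro r t i; rcases hx r t i with h | h <;> rw [h] <;> norm_num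
  have hcount : ∀ i, (c i : ℝ) = ∑ r, ∑ t, x r t i := by
    intro i
    rw [← Finset.sum_product']
    rw [hc]
    push_cast
    rw [Finset.card_filter]
    push_cast
    apply Finset.sum_congr rfl
    intro p _
    rcases hx p.1 p.2 i with h | h <;> simp [h]
  -- each served user needs at least n i pairs
  have hneed : ∀ i ∈ S, n i ≤ c i := by
    intro i hi
    have hui : u i = 1 := (Finset.mem_filter.mp hi).2
    have h1 : Λ i ≤ (c i : ℝ) * dmax := by
      have hle1 := hserve i
      rw [hui, one_mul] at hle1
      have heq : ∑ r, ∑ t, x r t i * dmax = (c i : ℝ) * dmax := by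
        simp_rw [← Finset.sum_mul]
        rw [hcount]
      rw [← heq]
      exact hle1
    have h2 : Λ i / dmax ≤ (c i : ℝ) := by
      rw [div_le_iff₀ hdmax]; exact h1
    exact Nat.ceil_le.mpr h2
  -- total pairs bounded by budget
  have hbudget : ∑ i ∈ S, c i ≤ Fintype.card R * Fintype.card T := by
    have hreal : ((∑ i ∈ S, c i : ℕ) : ℝ) ≤ (Fintype.card R * Fintype.card T : ℕ) := by
      push_cast
      calc (∑ i ∈ S, (c i : ℝ)) = ∑ i ∈ S, ∑ r, ∑ t, x r t i := by
            apply Finset.sum_congr rfl; intro i _; exact hcount i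
        _ = ∑ r, ∑ t, ∑ i ∈ S, x r t i := by
            rw [Finset.sum_comm]; congr 1; ext r; rw [Finset.sum_comm]
        _ ≤ ∑ r, ∑ t, (1:ℝ) := by
            apply Finset.sum_le_sum; intro r _
            apply Finset.sum_le_sum; intro t _
            calc ∑ i ∈ S, x r t i ≤ ∑ i, x r t i :=
                  Finset.sum_le_sum_of_subset_of_nonneg (S.subset_univ)
                    (fun i _ _ => hxnonneg r t i)
              _ ≤ 1 := horth r t
        _ = (Fintype.card R : ℝ) * (Fintype.card T : ℝ) := by
            simp [Finset.sum_const, Finset.card_univ, mul_comm]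
    exact_mod_cast hreal
  have hsumS : ∑ i ∈ S, n i ≤ Fintype.card R * Fintype.card T :=
    le_trans (Finset.sum_le_sum hneed) hbudget
  have hmem : S.card ∈ {k : ℕ | k ≤ Fintype.card I ∧
      botkSum n k ≤ Fintype.card R * Fintype.card T} := by
    refine ⟨?_, le_trans (botkSum_le_sum n S) hsumS⟩
    calc S.card ≤ Finset.univ.card := Finset.card_le_card S.subset_univ
      _ = Fintype.card I := Finset.card_univ
  have hbdd : BddAbove {k : ℕ | k ≤ Fintype.card I ∧
      botkSum n k ≤ Fintype.card R * Fintype.card T} :=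
    ⟨Fintype.card I, fun k hk => hk.1⟩
  have hcard_le : S.card ≤ sSup {k : ℕ | k ≤ Fintype.card I ∧
      botkSum n k ≤ Fintype.card R * Fintype.card T} :=
    le_csSup hbdd hmem
  have hsum_u : ∑ i, u i = (S.card : ℝ) := by
    rw [hS]
    rw [← Finset.sum_filter_add_sum_filter_not Finset.univ (fun i => u i = 1)]
    have h1 : ∑ i ∈ Finset.univ.filter (fun i => u i = 1), u i
        = (Finset.univ.filter (fun i => u i = 1)).card := by
      rw [Finset.sum_congr rfl (fun i hi => (Finset.mem_filter.mp hi).2)]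
      simp
    have h2 : ∑ i ∈ Finset.univ.filter (fun i => ¬ u i = 1), u i = 0 := by
      apply Finset.sum_eq_zero
      intro i hi
      rcases hu i with h | h
      · exact h
      · exact absurd h (Finset.mem_filter.mp hi).2
    rw [h1, h2, add_zero]
  rw [hsum_u]
  exact_mod_cast hcard_le
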